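/- Let p be a prime and F a field. Let G be an irreducible subgroup of GL(p,F) all of whose elements are monomial matrices with all nonzero entries roots of unity, and suppose the diagonal subgroup A = G ∩ D(p,F) contains a non-scalar matrix. Let w ∈ GL(p,F) be such that every element of w⁻¹Gw is a monomial matrix with all nonzero entries roots of unity and every element of w⁻¹Aw is diagonal. Then w is a monomial matrix. If moreover F is algebraically closed, then there exists λ ∈ Fˣ such that λw is a monomial matrix all of whose nonzero entries are roots of unity. -/

import Mathlib

/-- `σ` is the permutation part of the monomial matrix `g`. -/
def HasPermPart {m : Type*} [DecidableEq m] {F : Type*} [Field F]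
    (g : Matrix m m F) (σ : Equiv.Perm m) : Prop :=
  ∃ d : m → Fˣ, ∀ i j, g i j = if i = σ j then (d j : F) else 0

/-- A matrix is monomial if it has a permutation part. -/
def IsMonomial {m : Type*} [DecidableEq m] {F : Type*} [Field F]
    (g : Matrix m m F) : Prop :=
  ∃ σ : Equiv.Perm m, HasPermPart g σ

/-- A matrix is monomial with all nonzero entries roots of unity. -/
def IsMonomialRootsOfUnity {m : Type*} [DecidableEq m] {F : Type*} [Field F]
    (g : Matrix m m F) : Prop :=
  ∃ (σ : Equiv.Perm m) (d : m → Fˣ), (∀ j, IsOfFinOrder (d j)) ∧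
    ∀ i j, g i j = if i = σ j then (d j : F) else 0

/-- A matrix is scalar if it is a (nonzero) multiple of the identity. -/
def IsScalarMatrix {m : Type*} [DecidableEq m] {F : Type*} [Field F]
    (g : Matrix m m F) : Prop :=
  ∃ c : F, g = c • (1 : Matrix m m F)

namespace MonAux

variable {n : Type*} [Fintype n] [DecidableEq n] {F : Type*} [Field F]

/-- concrete monomial form -/
def HasForm (g : Matrix n n F) (σ : Equiv.Perm n) (d : n → Fˣ) : Prop :=
  ∀ i j, g i j = if i = σ j then (d j : F) else 0

theorem HasForm.mul {g h : Matrix n n F} {σ τ : Equiv.Perm n} {d e : n → Fˣ}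
    (hg : HasForm g σ d) (hh : HasForm h τ e) :
    HasForm (g * h) (σ * τ) (fun j => d (τ j) * e j) := by
  intro i j
  rw [Matrix.mul_apply, Finset.sum_eq_single (τ j)]
  · rw [hg, hh, if_pos rfl]
    show _ = if i = σ (τ j) then ((d (τ j) * e j : Fˣ) : F) else 0
    simp only [Equiv.Perm.mul_apply, Units.val_mul]
    split_ifs <;> simp
  · intro k _ hk
    rw [hh, if_neg hk, mul_zero]
  · intro hk
    exact absurd (Finset.mem_univ _) hk

theorem HasForm.unique {g : Matrix n n F} {σ σ' : Equiv.Perm n} {d d' : n → Fˣ}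
    (h : HasForm g σ d) (h' : HasForm g σ' d') : σ = σ' ∧ d = d' := by
  have hσ : ∀ j, σ j = σ' j := by
    intro j
    by_contra hne
    have h1 := h (σ j) j
    have h2 := h' (σ j) j
    rw [if_pos rfl] at h1
    rw [if_neg hne] at h2
    exact (d j).ne_zero (h1.symm.trans h2)
  constructor
  · exact Equiv.ext hσ
  · funext j
    have h1 := h (σ j) j
    have h2 := h' (σ j) j
    rw [if_pos rfl] at h1
    rw [if_pos (hσ j)] at h2
    exact Units.ext (h1.symm.trans h2)

theorem hasForm_one : HasForm (1 : Matrix n n F) 1 (fun _ => 1) := by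
  intro i j
  simp [Matrix.one_apply]
  rfl

theorem HasForm.isDiag {g : Matrix n n F} {d : n → Fˣ} (h : HasForm g 1 d) :
    Matrix.IsDiag g := by
  intro i j hij
  rw [h, if_neg]
  exact hij

theorem HasForm.perm_eq_one {g : Matrix n n F} {σ : Equiv.Perm n} {d : n → Fˣ}
    (h : HasForm g σ d) (hd : Matrix.IsDiag g) : σ = 1 := by
  apply Equiv.ext
  intro j
  by_contra hne
  have hne' : σ j ≠ j := hne
  have : g (σ j) j = 0 := hd hne'
  rw [h, if_pos rfl] at this
  exact (d j).ne_zero this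

theorem HasForm.diag_apply {g : Matrix n n F} {d : n → Fˣ} (h : HasForm g 1 d) (i : n) :
    g i i = (d i : F) := by
  rw [h]
  exact if_pos rfl

theorem HasForm.congr_d {g : Matrix n n F} {σ : Equiv.Perm n} {d d' : n → Fˣ}
    (h : HasForm g σ d) (hd : ∀ j, d' j = d j) : HasForm g σ d' := by
  intro i j; rw [h, hd j]

/-- relation between forms of `g` and `g⁻¹` for a unit `g`. -/
theorem inv_form {g : (Matrix n n F)ˣ} {σ ρ : Equiv.Perm n} {d e : n → Fˣ}
    (hg : HasForm (↑g) σ d) (hginv : HasForm (↑g⁻¹) ρ e) :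
    ρ = σ⁻¹ ∧ ∀ j, e (σ j) * d j = 1 := by
  have hmul : HasForm ((↑g⁻¹ : Matrix n n F) * (↑g : Matrix n n F)) (ρ * σ) (fun j => e (σ j) * d j) :=
    hginv.mul hg
  have hone : ((↑g⁻¹ : Matrix n n F) * (↑g : Matrix n n F)) = 1 := by
    rw [← Units.val_mul, inv_mul_cancel, Units.val_one]
  rw [hone] at hmul
  obtain ⟨h1, h2⟩ := hmul.unique hasForm_one
  refine ⟨eq_inv_of_mul_eq_one_left h1, fun j => ?_⟩
  exact congrFun h2 j

end MonAux

set_option maxHeartbeats 1000000 in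
/-- Let `G ≤ GL(p,F)` be irreducible, consisting of monomial matrices with
root-of-unity entries, with non-scalar diagonal subgroup `A = G ∩ D(p,F)`.
If `w⁻¹Gw` again consists of such monomial matrices and `w⁻¹Aw` is diagonal,
then `w` is monomial; if `F` is algebraically closed, some scalar multiple of `w`
is monomial with root-of-unity entries. -/
theorem conjugator_respecting_diagonal_is_monomial
    {p : ℕ} (hp : p.Prime) {F : Type*} [Field F]
    (G : Subgroup (Matrix.GeneralLinearGroup (Fin p) F))
    (hirr : ∀ W : Submodule F (Fin p → F),
      (∀ g ∈ G, ∀ v ∈ W, Matrix.mulVec (g : Matrix (Fin p) (Fin p) F) v ∈ W) →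
      W = ⊥ ∨ W = ⊤)
    (hmono : ∀ g ∈ G, IsMonomialRootsOfUnity (g : Matrix (Fin p) (Fin p) F))
    (hnonscalar : ∃ a ∈ G, Matrix.IsDiag (a : Matrix (Fin p) (Fin p) F) ∧
      ¬ IsScalarMatrix (a : Matrix (Fin p) (Fin p) F))
    (w : Matrix.GeneralLinearGroup (Fin p) F)
    (hwG : ∀ g ∈ G, IsMonomialRootsOfUnity
      ((w⁻¹ * g * w : Matrix.GeneralLinearGroup (Fin p) F) : Matrix (Fin p) (Fin p) F))
    (hwA : ∀ a ∈ G, Matrix.IsDiag (a : Matrix (Fin p) (Fin p) F) →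
      Matrix.IsDiag ((w⁻¹ * a * w : Matrix.GeneralLinearGroup (Fin p) F) : Matrix (Fin p) (Fin p) F)) :
    IsMonomial (w : Matrix (Fin p) (Fin p) F) ∧
    (IsAlgClosed F → ∃ c : Fˣ,
      IsMonomialRootsOfUnity ((c : F) • (w : Matrix (Fin p) (Fin p) F))) := by
  classical
  have hp0 : 0 < p := hp.pos
  -- STEP 0: forms for elements of G
  have hformG : ∀ g ∈ G, ∃ σ : Equiv.Perm (Fin p), ∃ d : Fin p → Fˣ,
      (∀ j, IsOfFinOrder (d j)) ∧
      MonAux.HasForm (g : Matrix (Fin p) (Fin p) F) σ d := by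
    intro g hg
    obtain ⟨σ, d, hd, hform⟩ := hmono g hg
    exact ⟨σ, d, hd, hform⟩
  -- STEP 1: transitivity
  have htrans : ∀ i i' : Fin p, ∃ g ∈ G, (g : Matrix (Fin p) (Fin p) F) i' i ≠ 0 := by
    intro i i'
    by_contra hcon
    push_neg at hcon
    set S : Set (Fin p → F) :=
      {v | ∃ g ∈ G, v = Matrix.mulVec (g : Matrix (Fin p) (Fin p) F) (Pi.single i 1)} with hS
    have hWinv : ∀ g ∈ G, ∀ v ∈ Submodule.span F S,
        Matrix.mulVec (g : Matrix (Fin p) (Fin p) F) v ∈ Submodule.span F S := by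
      intro g hg v hv
      have hmap : Submodule.map (Matrix.mulVecLin (g : Matrix (Fin p) (Fin p) F))
          (Submodule.span F S) ≤ Submodule.span F S := by
        rw [Submodule.map_span, Submodule.span_le]
        rintro x ⟨y, ⟨h, hh, rfl⟩, rfl⟩
        apply Submodule.subset_span
        refine ⟨g * h, mul_mem hg hh, ?_⟩
        rw [Matrix.mulVecLin_apply, Matrix.mulVec_mulVec, ← Units.val_mul]
      exact hmap (Submodule.mem_map_of_mem hv)
    have hsingle : Pi.single i (1 : F) ∈ Submodule.span F S := by
      apply Submodule.subset_span
      exact ⟨1, one_mem G, by rw [Units.val_one, Matrix.one_mulVec]⟩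
    have hne : Submodule.span F S ≠ ⊥ := by
      intro hbot
      rw [hbot, Submodule.mem_bot] at hsingle
      have := congrFun hsingle i
      simp at this
    have hTop : Submodule.span F S = ⊤ := (hirr _ hWinv).resolve_left hne
    have hle : Submodule.span F S ≤
        LinearMap.ker (LinearMap.proj i' : (Fin p → F) →ₗ[F] F) := by
      rw [Submodule.span_le]
      rintro v ⟨g, hg, rfl⟩
      simp [LinearMap.mem_ker, Matrix.mulVec_single, hcon g hg]
    rw [hTop] at hle
    have : Pi.single i' (1 : F) ∈ LinearMap.ker (LinearMap.proj i' : (Fin p → F) →ₗ[F] F) :=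
      hle Submodule.mem_top
    simp [LinearMap.mem_ker] at this
  -- STEP 2: conjugation of diagonal elements
  have hconj : ∀ g ∈ G, ∀ σ : Equiv.Perm (Fin p), ∀ d : Fin p → Fˣ,
      MonAux.HasForm (g : Matrix (Fin p) (Fin p) F) σ d →
      ∀ a ∈ G, Matrix.IsDiag (a : Matrix (Fin p) (Fin p) F) →
      Matrix.IsDiag ((g⁻¹ * a * g : Matrix.GeneralLinearGroup (Fin p) F) : Matrix (Fin p) (Fin p) F) ∧
      ∀ j, ((g⁻¹ * a * g : Matrix.GeneralLinearGroup (Fin p) F) : Matrix (Fin p) (Fin p) F) j j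
        = (a : Matrix (Fin p) (Fin p) F) (σ j) (σ j) := by
    intro g hg σ d hform a ha hdiag
    obtain ⟨ρ, e, _, hrho⟩ := hformG g⁻¹ (inv_mem hg)
    obtain ⟨hρ, hu⟩ := MonAux.inv_form hform hrho
    obtain ⟨τa, f, _, hfa⟩ := hformG a ha
    have hτa : τa = 1 := hfa.perm_eq_one hdiag
    subst hτa
    have hprod := (hrho.mul hfa).mul hform
    have hcoe : ((g⁻¹ * a * g : Matrix.GeneralLinearGroup (Fin p) F) : Matrix (Fin p) (Fin p) F)
        = (↑g⁻¹ : Matrix (Fin p) (Fin p) F) * (a : Matrix (Fin p) (Fin p) F)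
          * (g : Matrix (Fin p) (Fin p) F) := by
      simp [Units.val_mul]
    have hperm : ρ * 1 * σ = 1 := by
      rw [hρ]; group
    rw [← hcoe] at hprod
    rw [hperm] at hprod
    have hval : ∀ j, f (σ j) = e ((1 : Equiv.Perm (Fin p)) (σ j)) * f (σ j) * d j := by
      intro j
      have h1 := hu j
      simp only [Equiv.Perm.one_apply]
      rw [mul_comm (e (σ j)) (f (σ j)), mul_assoc, h1, mul_one]
    have hform' : MonAux.HasForm
        ((g⁻¹ * a * g : Matrix.GeneralLinearGroup (Fin p) F) : Matrix (Fin p) (Fin p) F)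
        1 (fun j => f (σ j)) := hprod.congr_d (fun j => hval j)
    refine ⟨hform'.isDiag, fun j => ?_⟩
    rw [hform'.diag_apply, hfa.diag_apply]
  -- E relation and separation
  set E : Fin p → Fin p → Prop := fun i j =>
    ∀ a ∈ G, Matrix.IsDiag (a : Matrix (Fin p) (Fin p) F) →
      (a : Matrix (Fin p) (Fin p) F) i i = (a : Matrix (Fin p) (Fin p) F) j j with hE
  have hErefl : ∀ i, E i i := fun i a _ _ => rfl
  have hEsymm : ∀ {i j}, E i j → E j i := fun h a ha hd => (h a ha hd).symm
  have hEtrans : ∀ {i j k}, E i j → E j k → E i k :=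
    fun h1 h2 a ha hd => (h1 a ha hd).trans (h2 a ha hd)
  have hEinv : ∀ g ∈ G, ∀ σ : Equiv.Perm (Fin p), ∀ d : Fin p → Fˣ,
      MonAux.HasForm (g : Matrix (Fin p) (Fin p) F) σ d →
      ∀ i j, E i j → E (σ i) (σ j) := by
    intro g hg σ d hform i j hij a ha hdiag
    obtain ⟨hd', hv'⟩ := hconj g hg σ d hform a ha hdiag
    have h1 := hv' i
    have h2 := hv' j
    rw [← h1, ← h2]
    exact hij _ (mul_mem (mul_mem (inv_mem hg) ha) hg) hd'
  have hsep : ∀ i j : Fin p, i ≠ j → ∃ a ∈ G,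
      Matrix.IsDiag (a : Matrix (Fin p) (Fin p) F) ∧
      (a : Matrix (Fin p) (Fin p) F) i i ≠ (a : Matrix (Fin p) (Fin p) F) j j := by
    by_contra hcon
    push_neg at hcon
    obtain ⟨i0, j0, hne0, hE0raw⟩ := hcon
    have hE0 : E i0 j0 := fun a ha hd => hE0raw a ha hd
    set s : Setoid (Fin p) :=
      ⟨E, ⟨hErefl, fun {x y} h => hEsymm h, fun {x y z} h1 h2 => hEtrans h1 h2⟩⟩ with hsdef
    set C : Fin p → Finset (Fin p) := fun k => Finset.univ.filter (fun j => E k j) with hC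
    have hmemC : ∀ k j, j ∈ C k ↔ E k j := by
      intro k j
      rw [hC]
      simp only [Finset.mem_filter, Finset.mem_univ, true_and]
    have hcardC : ∀ k, (C k).card = (C i0).card := by
      intro k
      obtain ⟨g, hg, hgne⟩ := htrans i0 k
      obtain ⟨σ, d, _, hform⟩ := hformG g hg
      have hk : k = σ i0 := by
        by_contra h
        rw [hform k i0, if_neg h] at hgne
        exact hgne rfl
      obtain ⟨ρ, e, _, hrho⟩ := hformG g⁻¹ (inv_mem hg)
      obtain ⟨hρ, _⟩ := MonAux.inv_form hform hrho
      symm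
      apply Finset.card_bij (fun j _ => σ j)
      · intro j hj
        rw [hmemC, hk]
        exact hEinv g hg σ d hform i0 j ((hmemC i0 j).mp hj)
      · intro x hx y hy hxy
        exact σ.injective hxy
      · intro b hb
        refine ⟨σ⁻¹ b, ?_, by simp⟩
        rw [hmemC]
        have hEb := hEinv g⁻¹ (inv_mem hg) ρ e hrho k b ((hmemC k b).mp hb)
        rw [hρ] at hEb
        have hik : σ⁻¹ k = i0 := by rw [hk]; simp
        rwa [hik] at hEb
    have hsum : (Finset.univ : Finset (Fin p)).card
        = ∑ b : Quotient s, (Finset.univ.filter (fun x => Quotient.mk s x = b)).card :=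
      Finset.card_eq_sum_card_fiberwise (fun x _ => Finset.mem_univ _)
    have hfib : ∀ b : Quotient s,
        (Finset.univ.filter (fun x => Quotient.mk s x = b)).card = (C i0).card := by
      intro b
      induction b using Quotient.inductionOn with
      | h k =>
        rw [← hcardC k]
        congr 1
        ext x
        rw [Finset.mem_filter, hmemC]
        simp only [Finset.mem_univ, true_and]
        constructor
        · intro h
          exact hEsymm (Quotient.eq''.mp h)
        · intro h
          exact Quotient.sound (hEsymm h)
    rw [Finset.sum_congr rfl (fun b _ => hfib b), Finset.sum_const, Finset.card_univ,
      Fintype.card_fin, smul_eq_mul] at hsum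
    have hdvd : (C i0).card ∣ p :=
      ⟨(Finset.univ : Finset (Quotient s)).card, hsum.trans (Nat.mul_comm _ _)⟩
    have h2le : 2 ≤ (C i0).card := by
      apply Finset.one_lt_card.mpr
      exact ⟨i0, (hmemC i0 i0).mpr (hErefl i0), j0, (hmemC i0 j0).mpr hE0, hne0⟩
    have hcardp : (C i0).card = p := by
      rcases (Nat.Prime.eq_one_or_self_of_dvd hp _ hdvd) with h | h
      · omega
      · exact h
    have huniv : C i0 = Finset.univ := by
      apply Finset.eq_univ_of_card
      rw [hcardp, Fintype.card_fin]
    have hall : ∀ i j : Fin p, E i j := by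
      intro i j
      have h1 : E i0 i := (hmemC i0 i).mp (huniv ▸ Finset.mem_univ i)
      have h2 : E i0 j := (hmemC i0 j).mp (huniv ▸ Finset.mem_univ j)
      exact hEtrans (hEsymm h1) h2
    obtain ⟨a0, ha0, hd0, hns0⟩ := hnonscalar
    apply hns0
    refine ⟨(a0 : Matrix (Fin p) (Fin p) F) i0 i0, ?_⟩
    ext i j
    rw [Matrix.smul_apply, Matrix.one_apply]
    by_cases h : i = j
    · subst h
      rw [if_pos rfl, smul_eq_mul, mul_one]
      exact (hall i0 i a0 ha0 hd0).symm ▸ (hall i0 i a0 ha0 hd0).symm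
    · rw [if_neg h, smul_zero]
      exact hd0 h
  -- STEP 3: columns of w
  have hdetw : (w : Matrix (Fin p) (Fin p) F).det ≠ 0 := by
    have : IsUnit (w : Matrix (Fin p) (Fin p) F) := ⟨w, rfl⟩
    rw [Matrix.isUnit_iff_isUnit_det] at this
    exact this.ne_zero
  have hwb : ∀ a ∈ G, Matrix.IsDiag (a : Matrix (Fin p) (Fin p) F) →
      ∀ i j, (w : Matrix (Fin p) (Fin p) F) i j ≠ 0 →
      (a : Matrix (Fin p) (Fin p) F) i i =
        ((w⁻¹ * a * w : Matrix.GeneralLinearGroup (Fin p) F) : Matrix (Fin p) (Fin p) F) j j := by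
    intro a ha hdiag i j hne
    set b := (w⁻¹ * a * w : Matrix.GeneralLinearGroup (Fin p) F) with hbdef
    have hbd : Matrix.IsDiag (b : Matrix (Fin p) (Fin p) F) := hwA a ha hdiag
    have hawb : (a : Matrix (Fin p) (Fin p) F) * (w : Matrix (Fin p) (Fin p) F)
        = (w : Matrix (Fin p) (Fin p) F) * (b : Matrix (Fin p) (Fin p) F) := by
      have : a * w = w * b := by rw [hbdef]; group
      calc (a : Matrix (Fin p) (Fin p) F) * (w : Matrix (Fin p) (Fin p) F)
          = ((a * w : Matrix.GeneralLinearGroup (Fin p) F) : Matrix (Fin p) (Fin p) F) := by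
            rw [Units.val_mul]
        _ = ((w * b : Matrix.GeneralLinearGroup (Fin p) F) : Matrix (Fin p) (Fin p) F) := by
            rw [this]
        _ = _ := by rw [Units.val_mul]
    have hentry := congrFun (congrFun hawb i) j
    rw [Matrix.mul_apply, Matrix.mul_apply] at hentry
    rw [Finset.sum_eq_single i (fun k _ hk => by
        rw [hdiag (Ne.symm hk), zero_mul]) (fun h => absurd (Finset.mem_univ _) h)] at hentry
    rw [Finset.sum_eq_single j (fun k _ hk => by
        rw [hbd hk, mul_zero]) (fun h => absurd (Finset.mem_univ _) h)] at hentry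
    exact mul_right_cancel₀ hne (by rw [hentry, mul_comm])
  have hcolkey : ∀ j i i' : Fin p, (w : Matrix (Fin p) (Fin p) F) i j ≠ 0 →
      (w : Matrix (Fin p) (Fin p) F) i' j ≠ 0 → i = i' := by
    intro j i i' hi hi'
    by_contra hne
    obtain ⟨a, ha, hdiag, hane⟩ := hsep i i' hne
    exact hane ((hwb a ha hdiag i j hi).trans (hwb a ha hdiag i' j hi').symm)
  have hcolne : ∀ j : Fin p, ∃ i, (w : Matrix (Fin p) (Fin p) F) i j ≠ 0 := by
    intro j
    by_contra hcon
    push_neg at hcon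
    exact hdetw (Matrix.det_eq_zero_of_column_eq_zero j hcon)
  choose f hf using hcolne
  have hfsurj : Function.Surjective f := by
    intro i
    by_contra hcon
    push_neg at hcon
    apply hdetw
    apply Matrix.det_eq_zero_of_row_eq_zero i
    intro j
    by_contra hne
    exact hcon j (hcolkey j i (f j) hne (hf j)).symm
  have hfbij : Function.Bijective f := Finite.surjective_iff_bijective.mp hfsurj
  set σw : Equiv.Perm (Fin p) := Equiv.ofBijective f hfbij with hσw
  set c : Fin p → Fˣ := fun j => Units.mk0 ((w : Matrix (Fin p) (Fin p) F) (f j) j) (hf j)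
    with hc
  have hwform : MonAux.HasForm (w : Matrix (Fin p) (Fin p) F) σw c := by
    intro i j
    have hσval : σw j = f j := rfl
    rw [hσval]
    split_ifs with h
    · rw [h]; rfl
    · by_contra hne
      exact h (hcolkey j i (f j) hne (hf j))
  refine ⟨⟨σw, c, hwform⟩, fun _ => ?_⟩
  -- STEP 4: ratios are roots of unity
  have hratio : ∀ j k : Fin p, IsOfFinOrder (c j * (c k)⁻¹) := by
    intro j k
    obtain ⟨g, hg, hgne⟩ := htrans (σw j) (σw k)
    obtain ⟨τ, d, hd, hform⟩ := hformG g hg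
    have hτ : σw k = τ (σw j) := by
      by_contra h
      rw [hform _ _, if_neg h] at hgne
      exact hgne rfl
    obtain ⟨τ', d', hd', hform'⟩ := hwG g hg
    have hform'' : MonAux.HasForm
        ((w⁻¹ * g * w : Matrix.GeneralLinearGroup (Fin p) F) : Matrix (Fin p) (Fin p) F)
        τ' d' := hform'
    have hgw : (g : Matrix (Fin p) (Fin p) F) * (w : Matrix (Fin p) (Fin p) F)
        = (w : Matrix (Fin p) (Fin p) F)
          * ((w⁻¹ * g * w : Matrix.GeneralLinearGroup (Fin p) F) : Matrix (Fin p) (Fin p) F) := by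
      have hgl : g * w = w * (w⁻¹ * g * w) := by group
      calc (g : Matrix (Fin p) (Fin p) F) * (w : Matrix (Fin p) (Fin p) F)
          = ((g * w : Matrix.GeneralLinearGroup (Fin p) F) : Matrix (Fin p) (Fin p) F) := by
            rw [Units.val_mul]
        _ = ((w * (w⁻¹ * g * w) : Matrix.GeneralLinearGroup (Fin p) F) :
            Matrix (Fin p) (Fin p) F) := by rw [hgl]
        _ = _ := by rw [Units.val_mul]
    have hL : MonAux.HasForm ((g : Matrix (Fin p) (Fin p) F) * (w : Matrix (Fin p) (Fin p) F))
        (τ * σw) (fun j => d (σw j) * c j) := hform.mul hwform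
    have hR : MonAux.HasForm ((g : Matrix (Fin p) (Fin p) F) * (w : Matrix (Fin p) (Fin p) F))
        (σw * τ') (fun j => c (τ' j) * d' j) := by
      rw [hgw]
      exact hwform.mul hform''
    obtain ⟨hperm, hvals⟩ := hL.unique hR
    have h1 : τ (σw j) = σw (τ' j) := by
      have := congrArg (fun (e : Equiv.Perm (Fin p)) => e j) hperm
      simpa using this
    have hk' : τ' j = k := σw.injective (by rw [← h1, ← hτ])
    have h2 : d (σw j) * c j = c (τ' j) * d' j := congrFun hvals j
    rw [hk'] at h2
    have h2v : ((d (σw j) : F)) * (c j : F) = (c k : F) * (d' j : F) := by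
      have := congrArg (Units.val) h2
      simpa [Units.val_mul] using this
    have key : c j * (c k)⁻¹ = d' j * (d (σw j))⁻¹ := by
      apply Units.ext
      rw [Units.val_mul, Units.val_mul, Units.val_inv_eq_inv_val, Units.val_inv_eq_inv_val]
      field_simp
      linear_combination h2v
    rw [key]
    exact (hd' j).mul ((hd (σw j)).inv)
  set j0 : Fin p := ⟨0, hp0⟩ with hj0
  refine ⟨(c j0)⁻¹, σw, fun j => (c j0)⁻¹ * c j, fun j => ?_, fun i j => ?_⟩
  · have := hratio j j0
    rwa [mul_comm] at this
  · rw [Matrix.smul_apply, hwform i j]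
    split_ifs with h
    · simp [smul_eq_mul]
    · simp
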